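/- arXiv:1702.05141 — 3 statements merged into one kernel-verified Lean document; each statement's English description precedes it below -/
import Mathlib

section
/- Let M be a loopless matroid on a finite nonempty ground set E and let S be a nested set of M. Then the set P_S = { w^{S,α} : α : S → ℝ strictly compatible with S } (the set of M-ultrametrics with topology S) is tropically convex: if α and β are strictly compatible with S and λ, μ ∈ ℝ satisfy max(λ,μ) = 0, then the vector e ↦ max(λ + w^{S,α}(e), μ + w^{S,β}(e)) equals w^{S,γ} for some strictly compatible γ : S → ℝ. -/
variable {α : Type*}

/-- A circuit of `M`: a dependent subset of the ground set all of whose proper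
subsets are independent. -/
def MCircuit (M : Matroid α) (C : Set α) : Prop :=
  C ⊆ M.E ∧ ¬ M.Indep C ∧ ∀ D : Set α, D ⊂ C → M.Indep D

/-- A matroid is connected if its ground set is nonempty and any two distinct
elements of the ground set lie in a common circuit. -/
def MConnected (M : Matroid α) : Prop :=
  M.E.Nonempty ∧ ∀ a ∈ M.E, ∀ b ∈ M.E, a ≠ b → ∃ C, MCircuit M C ∧ a ∈ C ∧ b ∈ C

/-- The connected component of `e` in `M`: the equivalence class of `e` under the
relation "lying in a common circuit". -/
def MComponent (M : Matroid α) (e : α) : Set α :=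
  {f ∈ M.E | f = e ∨ ∃ C, MCircuit M C ∧ e ∈ C ∧ f ∈ C}

/-- A nested set of `M`: a collection of nonempty connected flats containing every
connected component of `M`, such that the closure of the union of any ≥ 2 pairwise
incomparable members induces a disconnected restriction. -/
def NestedSet (M : Matroid α) (S : Set (Set α)) : Prop :=
  (∀ F ∈ S, F.Nonempty ∧ M.IsFlat F ∧ MConnected (M.restrict F)) ∧
  (∀ e ∈ M.E, MComponent M e ∈ S) ∧
  (∀ T : Finset (Set α), ↑T ⊆ S → 2 ≤ T.card →
    (∀ F ∈ T, ∀ G ∈ T, F ≠ G → ¬ F ⊆ G ∧ ¬ G ⊆ F) →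
    ¬ MConnected (M.restrict (M.closure (⋃ F ∈ T, F))))

/-- `a : S → ℝ` is compatible with `S`: weakly monotone with respect to inclusion. -/
def Compat (S : Set (Set α)) (a : Set α → ℝ) : Prop :=
  ∀ F ∈ S, ∀ G ∈ S, F ⊆ G → a F ≤ a G

/-- `a : S → ℝ` is strictly compatible with `S`. -/
def StrictCompat (S : Set (Set α)) (a : Set α → ℝ) : Prop :=
  ∀ F ∈ S, ∀ G ∈ S, F ⊂ G → a F < a G

/-- `F` is the minimal member of `S` containing `e`. -/
def MinMem (S : Set (Set α)) (e : α) (F : Set α) : Prop :=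
  F ∈ S ∧ e ∈ F ∧ ∀ G ∈ S, e ∈ G → F ⊆ G

/-- `w` is the vector `w^{S,a}`, i.e. `w e = a (F_e)` where `F_e` is the minimal
member of `S` containing `e`, for every `e` in the ground set. -/
def Represents (M : Matroid α) (S : Set (Set α)) (a : Set α → ℝ) (w : α → ℝ) : Prop :=
  ∀ e ∈ M.E, ∃ F, MinMem S e F ∧ w e = a F

/-- The weight of a set `B` with respect to `w`. -/
noncomputable def bweight (w : α → ℝ) (B : Set α) : ℝ := ∑ᶠ e ∈ B, w e

/-- `B` is a `w`-minimum basis of `M`. -/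
def MinBase (M : Matroid α) (w : α → ℝ) (B : Set α) : Prop :=
  M.IsBase B ∧ ∀ B', M.IsBase B' → bweight w B ≤ bweight w B'

/-- `w` is an `M`-ultrametric: every ground element lies in some `w`-minimum basis. -/
def MUltrametric (M : Matroid α) (w : α → ℝ) : Prop :=
  ∀ e ∈ M.E, ∃ B, MinBase M w B ∧ e ∈ B

/-- The set of `M`-ultrametrics with a given topology `S` is tropically convex: a
tropical convex combination of two vectors `w^{S,a}`, `w^{S,b}` with `a, b` strictly
compatible is again of the form `w^{S,g}` with `g` strictly compatible. -/
theorem stmt8 (M : Matroid α) (hfin : M.E.Finite) (hne : M.E.Nonempty)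
    (hloop : ∀ e ∈ M.E, M.Indep {e}) (S : Set (Set α)) (hS : NestedSet M S)
    (a b : Set α → ℝ) (ha : StrictCompat S a) (hb : StrictCompat S b)
    (u w : α → ℝ) (hu : Represents M S a u) (hw : Represents M S b w)
    (lam mu : ℝ) (hlm : max lam mu = 0) :
    ∃ g : Set α → ℝ, StrictCompat S g ∧
      Represents M S g (fun e => max (lam + u e) (mu + w e)) := by
  refine ⟨fun F => max (lam + a F) (mu + b F), ?_, ?_⟩
  · intro F hF G hG hFG
    exact max_lt_max (by linarith [ha F hF G hG hFG]) (by linarith [hb F hF G hG hFG])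
  · intro e he
    obtain ⟨F, hF, hue⟩ := hu e he
    obtain ⟨G, hG, hwe⟩ := hw e he
    have : F = G := subset_antisymm (hF.2.2 G hG.1 hG.2.1) (hG.2.2 F hF.1 hF.2.1)
    subst this
    exact ⟨F, hF, by simp only [hue, hwe]⟩
end

section
/- Let n ≥ 2, let E be a set of 2-element subsets of [n] = {1,…,n}, and let x : E → ℝ. Then there exists an ultrametric u on [n] with u{i,j} = x{i,j} for every {i,j} ∈ E if and only if every edge e ∈ E is contained in some x-minimum maximal acyclic subset of E. -/
/-- A dissimilarity map on `X`: symmetric with zero diagonal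
(equivalently, a real number attached to each 2-element subset of `X`). -/
def IsDissim {X : Type*} (d : X → X → ℝ) : Prop :=
  (∀ x, d x x = 0) ∧ (∀ x y, d x y = d y x)

/-- An ultrametric: a dissimilarity map such that for all pairwise distinct `x,y,z`,
the maximum of the three pairwise values is attained at least twice. -/
def IsUltra {X : Type*} (d : X → X → ℝ) : Prop :=
  IsDissim d ∧ ∀ x y z : X, x ≠ y → x ≠ z → y ≠ z →
    ((d x y = d x z ∧ d y z ≤ d x y) ∨ (d x y = d y z ∧ d x z ≤ d x y) ∨
      (d x z = d y z ∧ d x y ≤ d x z))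

/-- `F` is a maximal acyclic subset (spanning forest) of the edge set `E`. -/
def MaxAcyclicIn {n : ℕ} (E F : Finset (Sym2 (Fin n))) : Prop :=
  F ⊆ E ∧ (SimpleGraph.fromEdgeSet (↑F : Set (Sym2 (Fin n)))).IsAcyclic ∧
    ∀ F', F ⊆ F' → F' ⊆ E → (SimpleGraph.fromEdgeSet (↑F' : Set (Sym2 (Fin n)))).IsAcyclic →
      F' = F

attribute [local instance] Classical.propDecidable

namespace Stmt18Aux

open SimpleGraph

variable {V : Type*}

/-- Arithmetic trichotomy: three two-sided max inequalities force the max to be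
attained twice. -/
lemma tri {a b c : ℝ} (h1 : a ≤ max b c) (h2 : b ≤ max a c) (h3 : c ≤ max a b) :
    (a = b ∧ c ≤ a) ∨ (a = c ∧ b ≤ a) ∨ (b = c ∧ a ≤ b) := by
  rcases le_max_iff.1 h1 with h | h <;> rcases le_max_iff.1 h2 with g | g <;>
    rcases le_max_iff.1 h3 with f | f <;>
    first
      | exact Or.inl ⟨by linarith, by linarith⟩
      | exact Or.inr (Or.inl ⟨by linarith, by linarith⟩)
      | exact Or.inr (Or.inr ⟨by linarith, by linarith⟩)

/-- Reachability in a graph with one extra edge decomposes. -/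
lemma reach_sup_edge {H : SimpleGraph V} {a b u v : V}
    (h : (H ⊔ SimpleGraph.fromEdgeSet {s(a, b)}).Reachable u v) :
    H.Reachable u v ∨ (H.Reachable u a ∧ H.Reachable b v) ∨
      (H.Reachable u b ∧ H.Reachable a v) := by
  obtain ⟨p⟩ := h
  induction p with
  | nil => exact Or.inl (Reachable.refl _)
  | @cons u c w hadj q ih =>
    rcases (sup_adj _ _ _ _).1 hadj with h' | h'
    · rcases ih with r | ⟨r1, r2⟩ | ⟨r1, r2⟩
      · exact Or.inl (h'.reachable.trans r)
      · exact Or.inr (Or.inl ⟨h'.reachable.trans r1, r2⟩)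
      · exact Or.inr (Or.inr ⟨h'.reachable.trans r1, r2⟩)
    · obtain ⟨hm, hne⟩ := (fromEdgeSet_adj _).1 h'
      have hm' : s(u, c) = s(a, b) := hm
      rcases Sym2.eq_iff.1 hm' with ⟨rfl, rfl⟩ | ⟨rfl, rfl⟩
      · rcases ih with r | ⟨r1, r2⟩ | ⟨r1, r2⟩
        · exact Or.inr (Or.inl ⟨Reachable.refl _, r⟩)
        · exact Or.inl (r1.symm.trans r2)
        · exact Or.inl r2
      · rcases ih with r | ⟨r1, r2⟩ | ⟨r1, r2⟩
        · exact Or.inr (Or.inr ⟨Reachable.refl _, r⟩)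
        · exact Or.inl r2
        · exact Or.inl (r1.symm.trans r2)

/-- If there is a walk from `i` to `j` in `G` but `i, j` are not `H`-reachable,
then some edge of the walk crosses the `H`-component of `i`. -/
lemma walk_cross {G H : SimpleGraph V} {i j : V} (p : G.Walk i j)
    (h : ¬ H.Reachable i j) :
    ∃ a b : V, s(a, b) ∈ p.edges ∧ H.Reachable i a ∧ ¬ H.Reachable i b := by
  revert h
  induction p with
  | nil => exact fun h => absurd (Reachable.refl _) h
  | @cons u c w hadj q ih =>
    intro h
    by_cases hc : H.Reachable u c
    · have hcj : ¬ H.Reachable c w := fun r => h (hc.trans r)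
      obtain ⟨a, b, hm, h1, h2⟩ := ih hcj
      exact ⟨a, b, List.mem_cons_of_mem _ hm, hc.trans h1,
        fun r => h2 (hc.symm.trans r)⟩
    · exact ⟨u, c, by simp [SimpleGraph.Walk.edges_cons], Reachable.refl _, hc⟩

/-- If every edge of `G` has `H`-reachable endpoints, `G`-reachability implies
`H`-reachability. -/
lemma reach_of_edges {G H : SimpleGraph V} (hGH : ∀ a b, G.Adj a b → H.Reachable a b)
    {u v : V} (h : G.Reachable u v) : H.Reachable u v := by
  obtain ⟨p⟩ := h
  induction p with
  | nil => exact Reachable.refl _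
  | @cons u c w hadj q ih => exact (hGH _ _ hadj).trans ih

lemma acyclic_mono {G H : SimpleGraph V} (hle : H ≤ G) (hG : G.IsAcyclic) :
    H.IsAcyclic := fun _ c hc => hG (c.mapLe hle) (hc.mapLe hle)

variable [DecidableEq (Sym2 V)]

lemma graph_insert (F : Finset (Sym2 V)) (g : Sym2 V) :
    SimpleGraph.fromEdgeSet (↑(insert g F) : Set (Sym2 V)) =
      SimpleGraph.fromEdgeSet (↑F : Set (Sym2 V)) ⊔ SimpleGraph.fromEdgeSet {g} := by
  ext u v
  simp only [fromEdgeSet_adj, sup_adj, Finset.coe_insert, Set.mem_insert_iff,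
    Finset.mem_coe, Set.mem_singleton_iff]
  tauto

lemma graph_erase_sdiff (F : Finset (Sym2 V)) (g : Sym2 V) :
    SimpleGraph.fromEdgeSet (↑(F.erase g) : Set (Sym2 V)) =
      SimpleGraph.fromEdgeSet (↑F : Set (Sym2 V)) \ SimpleGraph.fromEdgeSet {g} := by
  ext u v
  simp only [fromEdgeSet_adj, sdiff_adj, Finset.mem_coe, Finset.mem_erase,
    Set.mem_singleton_iff]
  tauto

lemma graph_erase_sup {F : Finset (Sym2 V)} {g : Sym2 V} (hg : g ∈ F) :
    SimpleGraph.fromEdgeSet (↑F : Set (Sym2 V)) =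
      SimpleGraph.fromEdgeSet (↑(F.erase g) : Set (Sym2 V)) ⊔
        SimpleGraph.fromEdgeSet {g} := by
  ext u v
  simp only [fromEdgeSet_adj, sup_adj, Finset.mem_coe, Finset.mem_erase,
    Set.mem_singleton_iff]
  constructor
  · rintro ⟨hm, hne⟩
    by_cases hEq : s(u, v) = g
    · exact Or.inr ⟨hEq, hne⟩
    · exact Or.inl ⟨⟨hEq, hm⟩, hne⟩
  · rintro (⟨⟨_, hm⟩, hne⟩ | ⟨hEq, hne⟩)
    · exact ⟨hm, hne⟩
    · exact ⟨hEq ▸ hg, hne⟩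

/-- Adding an edge between two non-reachable vertices of an acyclic graph keeps
it acyclic. -/
lemma acyclic_sup_edge {G : SimpleGraph V} {a b : V} (hG : G.IsAcyclic)
    (hab : ¬ G.Reachable a b) (hne : a ≠ b) :
    (G ⊔ SimpleGraph.fromEdgeSet {s(a, b)}).IsAcyclic := by
  have hnadj : ¬ G.Adj a b := fun h => hab h.reachable
  rw [isAcyclic_iff_forall_adj_isBridge]
  intro u v hadj
  rw [isBridge_iff]
  rcases (sup_adj _ _ _ _).1 hadj with h' | h'
  · -- old edge
    have hbr := (isAcyclic_iff_forall_adj_isBridge.1 hG) h'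
    rw [isBridge_iff] at hbr
    intro hr
    rw [deleteEdges] at hr
    have hne' : s(a, b) ≠ s(u, v) := by
      intro hEq
      rcases Sym2.eq_iff.1 hEq with ⟨rfl, rfl⟩ | ⟨rfl, rfl⟩
      · exact hnadj h'
      · exact hnadj h'.symm
    have hEq : (G ⊔ SimpleGraph.fromEdgeSet {s(a, b)}) \ SimpleGraph.fromEdgeSet {s(u, v)}
        = (G \ SimpleGraph.fromEdgeSet {s(u, v)}) ⊔ SimpleGraph.fromEdgeSet {s(a, b)} := by
      ext c d
      simp only [sdiff_adj, sup_adj, fromEdgeSet_adj, Set.mem_singleton_iff]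
      constructor
      · rintro ⟨h1 | h1, h2⟩
        · exact Or.inl ⟨h1, h2⟩
        · exact Or.inr h1
      · rintro (⟨h1, h2⟩ | ⟨h1, h2⟩)
        · exact ⟨Or.inl h1, h2⟩
        · exact ⟨Or.inr ⟨h1, h2⟩, fun hx => hne' (h1.symm.trans hx.1)⟩
    rw [hEq] at hr
    rcases reach_sup_edge hr with r | ⟨r1, r2⟩ | ⟨r1, r2⟩
    · exact hbr r
    · exact hab (((r1.mono sdiff_le).symm.trans h'.reachable).trans (r2.mono sdiff_le).symm)
    · exact hab (((r2.mono sdiff_le).trans h'.reachable.symm).trans (r1.mono sdiff_le))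
  · -- new edge
    obtain ⟨hm, hnuv⟩ := (fromEdgeSet_adj _).1 h'
    have hsm : s(u, v) = s(a, b) := hm
    intro hr
    have hle : (G ⊔ SimpleGraph.fromEdgeSet {s(a, b)}) \ SimpleGraph.fromEdgeSet {s(u, v)} ≤ G := by
      intro c d hcd
      rw [hsm] at hcd
      simp only [sdiff_adj, sup_adj] at hcd
      tauto
    have hGuv := hr.mono hle
    rcases Sym2.eq_iff.1 hsm with ⟨rfl, rfl⟩ | ⟨rfl, rfl⟩
    · exact hab hGuv
    · exact hab hGuv.symm

/-- In an acyclic graph given by a finite edge set, each edge is a bridge. -/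
lemma bridge_erase {F : Finset (Sym2 V)}
    (hF : (SimpleGraph.fromEdgeSet (↑F : Set (Sym2 V))).IsAcyclic)
    {p q : V} (hg : s(p, q) ∈ F) (hpq : p ≠ q) :
    ¬ (SimpleGraph.fromEdgeSet (↑(F.erase s(p, q)) : Set (Sym2 V))).Reachable p q := by
  have hadj : (SimpleGraph.fromEdgeSet (↑F : Set (Sym2 V))).Adj p q :=
    (fromEdgeSet_adj _).2 ⟨hg, hpq⟩
  have hbr := (isAcyclic_iff_forall_adj_isBridge.1 hF) hadj
  rw [isBridge_iff] at hbr
  intro hr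
  rw [graph_erase_sdiff] at hr
  exact hbr hr

end Stmt18Aux

namespace Stmt18Aux

open SimpleGraph

variable {n : ℕ}

/-- Characterization of maximal acyclic subsets via reachability. -/
lemma maxAcyclic_iff {E F : Finset (Sym2 (Fin n))} (hEd : ∀ e ∈ E, ¬ e.IsDiag) :
    MaxAcyclicIn E F ↔ F ⊆ E ∧
      (SimpleGraph.fromEdgeSet (↑F : Set (Sym2 (Fin n)))).IsAcyclic ∧
      ∀ a b : Fin n, a ≠ b → s(a, b) ∈ E →
        (SimpleGraph.fromEdgeSet (↑F : Set (Sym2 (Fin n)))).Reachable a b := by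
  constructor
  · rintro ⟨hFE, hac, hmax⟩
    refine ⟨hFE, hac, fun a b hne hE => ?_⟩
    by_contra hnr
    have hnotmem : s(a, b) ∉ F := fun hm =>
      hnr ((fromEdgeSet_adj _).2 ⟨Finset.mem_coe.2 hm, hne⟩).reachable
    have hac' : (SimpleGraph.fromEdgeSet (↑(insert s(a, b) F) : Set (Sym2 (Fin n)))).IsAcyclic := by
      rw [graph_insert]
      exact acyclic_sup_edge hac hnr hne
    have := hmax (insert s(a, b) F) (Finset.subset_insert _ _)
      (Finset.insert_subset hE hFE) hac'
    exact hnotmem (this ▸ Finset.mem_insert_self _ _)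
  · rintro ⟨hFE, hac, hreach⟩
    refine ⟨hFE, hac, fun F' hsub hFE' hac' => ?_⟩
    refine Finset.Subset.antisymm ?_ hsub
    intro e he
    revert he
    induction e using Sym2.ind with
    | _ a b =>
      intro he
      have hne : a ≠ b := by
        have := hEd _ (hFE' he)
        simpa [Sym2.mk_isDiag_iff] using this
      by_contra hnm
      have hFsub : F ⊆ F'.erase s(a, b) := fun f hf =>
        Finset.mem_erase.2 ⟨fun h => hnm (h ▸ hf), hsub hf⟩
      have h1 : (SimpleGraph.fromEdgeSet (↑F : Set (Sym2 (Fin n)))).Reachable a b :=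
        hreach a b hne (hFE' he)
      have h2 := h1.mono (fromEdgeSet_mono (by exact_mod_cast hFsub))
      exact bridge_erase hac' he hne h2

/-- The exchange lemma: swapping an edge of a maximal acyclic set for a
reconnecting edge yields another maximal acyclic set. -/
lemma swap_max {E F : Finset (Sym2 (Fin n))} (hEd : ∀ e ∈ E, ¬ e.IsDiag)
    (hF : MaxAcyclicIn E F) {p q r s : Fin n}
    (hg : s(p, q) ∈ F) (hrs : r ≠ s) (hE : s(r, s) ∈ E)
    (hnr : ¬ (SimpleGraph.fromEdgeSet (↑(F.erase s(p, q)) : Set (Sym2 (Fin n)))).Reachable r s)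
    (h1 : (SimpleGraph.fromEdgeSet (↑(F.erase s(p, q)) : Set (Sym2 (Fin n)))).Reachable p r)
    (h2 : (SimpleGraph.fromEdgeSet (↑(F.erase s(p, q)) : Set (Sym2 (Fin n)))).Reachable s q) :
    MaxAcyclicIn E (insert s(r, s) (F.erase s(p, q))) := by
  set H := SimpleGraph.fromEdgeSet (↑(F.erase s(p, q)) : Set (Sym2 (Fin n))) with hH
  obtain ⟨hFE, hac, hreach⟩ := (maxAcyclic_iff hEd).1 hF
  have hHle : H ≤ SimpleGraph.fromEdgeSet (↑F : Set (Sym2 (Fin n))) :=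
    fromEdgeSet_mono (by exact_mod_cast F.erase_subset _)
  have hHac : H.IsAcyclic := acyclic_mono hHle hac
  have hG' : SimpleGraph.fromEdgeSet (↑(insert s(r, s) (F.erase s(p, q))) : Set (Sym2 (Fin n)))
      = H ⊔ SimpleGraph.fromEdgeSet {s(r, s)} := graph_insert _ _
  have hle2 : H ≤ SimpleGraph.fromEdgeSet
      (↑(insert s(r, s) (F.erase s(p, q))) : Set (Sym2 (Fin n))) := by
    rw [hG']; exact le_sup_left
  have hadjrs : (SimpleGraph.fromEdgeSet
      (↑(insert s(r, s) (F.erase s(p, q))) : Set (Sym2 (Fin n)))).Adj r s :=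
    (fromEdgeSet_adj _).2 ⟨Finset.mem_coe.2 (Finset.mem_insert_self _ _), hrs⟩
  have hpq' : (SimpleGraph.fromEdgeSet
      (↑(insert s(r, s) (F.erase s(p, q))) : Set (Sym2 (Fin n)))).Reachable p q :=
    ((h1.mono hle2).trans hadjrs.reachable).trans (h2.mono hle2)
  rw [maxAcyclic_iff hEd]
  refine ⟨Finset.insert_subset hE ((F.erase_subset _).trans hFE), ?_, ?_⟩
  · rw [hG']
    exact acyclic_sup_edge hHac hnr hrs
  · intro c d hcd hcdE
    have hr := hreach c d hcd hcdE
    rw [graph_erase_sup hg] at hr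
    rcases reach_sup_edge hr with r0 | ⟨r1, r2⟩ | ⟨r1, r2⟩
    · exact r0.mono hle2
    · exact ((r1.mono hle2).trans hpq').trans (r2.mono hle2)
    · exact ((r1.mono hle2).trans hpq'.symm).trans (r2.mono hle2)

/-- An ultrametric bounds along walks: the endpoint value is at most any uniform
bound on the edge values. -/
lemma ultra_walk_bound {u : Fin n → Fin n → ℝ} (hu : IsUltra u)
    {G : SimpleGraph (Fin n)} {i j : Fin n} (p : G.Walk i j) (t : ℝ)
    (hb : ∀ a b : Fin n, s(a, b) ∈ p.edges → u a b ≤ t) : i = j ∨ u i j ≤ t := by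
  revert hb
  induction p with
  | nil => exact fun _ => Or.inl rfl
  | @cons v c w hadj q ih =>
    intro hb
    have hb' : ∀ a b : Fin n, s(a, b) ∈ q.edges → u a b ≤ t := fun a b hm =>
      hb a b (List.mem_cons_of_mem _ hm)
    have hvc : u v c ≤ t := hb v c (by simp [SimpleGraph.Walk.edges_cons])
    by_cases hvw : v = w
    · exact Or.inl hvw
    · right
      have hne1 : v ≠ c := hadj.ne
      rcases ih hb' with rfl | hcw
      · exact hvc
      · by_cases hcw' : c = w
        · subst hcw'; exact hvc
        · rcases hu.2 v w c hvw hne1 (fun h => hcw' h.symm) with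
            ⟨h1, _⟩ | ⟨h1, _⟩ | ⟨_, h2⟩
          · rw [h1]; exact hvc
          · rw [h1, hu.1.2 w c]; exact hcw
          · exact h2.trans hvc

lemma exists_maxAcyclic (E : Finset (Sym2 (Fin n))) : ∃ F, MaxAcyclicIn E F := by
  have hmem : (∅ : Finset (Sym2 (Fin n))) ∈ E.powerset.filter
      (fun F : Finset (Sym2 (Fin n)) =>
        (SimpleGraph.fromEdgeSet (↑F : Set (Sym2 (Fin n)))).IsAcyclic) := by
    refine Finset.mem_filter.2 ⟨Finset.empty_mem_powerset _, ?_⟩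
    simp only [Finset.coe_empty, fromEdgeSet_empty]
    exact isAcyclic_bot
  obtain ⟨F, hFA, hmax⟩ := Finset.exists_max_image (E.powerset.filter
      (fun F : Finset (Sym2 (Fin n)) =>
        (SimpleGraph.fromEdgeSet (↑F : Set (Sym2 (Fin n)))).IsAcyclic))
    Finset.card ⟨∅, hmem⟩
  rw [Finset.mem_filter, Finset.mem_powerset] at hFA
  refine ⟨F, hFA.1, hFA.2, fun F' hsub hE' hac' => ?_⟩
  have hF'A : F' ∈ E.powerset.filter
      (fun F : Finset (Sym2 (Fin n)) =>
        (SimpleGraph.fromEdgeSet (↑F : Set (Sym2 (Fin n)))).IsAcyclic) :=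
    Finset.mem_filter.2 ⟨Finset.mem_powerset.2 hE', hac'⟩
  exact (Finset.eq_of_subset_of_card_le hsub (hmax _ hF'A)).symm

/-- An edge of a minimum maximal acyclic set cannot be bypassed by strictly
cheaper edges. -/
lemma no_small_reach {E F : Finset (Sym2 (Fin n))} (hEd : ∀ e ∈ E, ¬ e.IsDiag)
    (x : Sym2 (Fin n) → ℝ)
    (hF : MaxAcyclicIn E F)
    (hmin : ∀ F', MaxAcyclicIn E F' → ∑ f ∈ F, x f ≤ ∑ f ∈ F', x f)
    {i j : Fin n} (hij : i ≠ j) (he : s(i, j) ∈ F) :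
    ¬ (SimpleGraph.fromEdgeSet
        (↑(E.filter (fun f => x f < x s(i, j))) : Set (Sym2 (Fin n)))).Reachable i j := by
  intro hr
  obtain ⟨hFE, hac, hreach⟩ := (maxAcyclic_iff hEd).1 hF
  have hnrij : ¬ (SimpleGraph.fromEdgeSet
      (↑(F.erase s(i, j)) : Set (Sym2 (Fin n)))).Reachable i j := bridge_erase hac he hij
  obtain ⟨p⟩ := hr
  obtain ⟨a, b, hmem, hia, hib⟩ := walk_cross p hnrij
  have hadjs := p.adj_of_mem_edges hmem
  obtain ⟨hmf, hab⟩ := (fromEdgeSet_adj _).1 hadjs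
  rw [Finset.mem_coe, Finset.mem_filter] at hmf
  have hfne : s(a, b) ≠ s(i, j) := by
    intro h
    exact absurd (h ▸ hmf.2) (lt_irrefl _)
  have hfnF : s(a, b) ∉ F := by
    intro hmF
    exact hib (hia.trans ((fromEdgeSet_adj _).2
      ⟨Finset.mem_coe.2 (Finset.mem_erase.2 ⟨hfne, hmF⟩), hab⟩).reachable)
  have hnab : ¬ (SimpleGraph.fromEdgeSet
      (↑(F.erase s(i, j)) : Set (Sym2 (Fin n)))).Reachable a b :=
    fun h => hib (hia.trans h)
  have hbsup : b ∈ p.support := p.snd_mem_support_of_mem_edges hmem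
  have hrGsib : (SimpleGraph.fromEdgeSet
      (↑(E.filter (fun f => x f < x s(i, j))) : Set (Sym2 (Fin n)))).Reachable i b :=
    ⟨p.takeUntil b hbsup⟩
  have hGsle : (SimpleGraph.fromEdgeSet
      (↑(E.filter (fun f => x f < x s(i, j))) : Set (Sym2 (Fin n)))) ≤
      SimpleGraph.fromEdgeSet (↑E : Set (Sym2 (Fin n))) :=
    fromEdgeSet_mono (by exact_mod_cast E.filter_subset _)
  have hrFib : (SimpleGraph.fromEdgeSet (↑F : Set (Sym2 (Fin n)))).Reachable i b := by
    refine reach_of_edges ?_ (hrGsib.mono hGsle)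
    intro c d hcd
    obtain ⟨hm, hnecd⟩ := (fromEdgeSet_adj _).1 hcd
    exact hreach c d hnecd (Finset.mem_coe.1 hm)
  rw [graph_erase_sup he] at hrFib
  have hrHjb : (SimpleGraph.fromEdgeSet
      (↑(F.erase s(i, j)) : Set (Sym2 (Fin n)))).Reachable j b := by
    rcases reach_sup_edge hrFib with r0 | ⟨r1, r2⟩ | ⟨r1, r2⟩
    · exact absurd r0 hib
    · exact r2
    · exact absurd r1 hnrij
  have hmax' := swap_max hEd hF he hab hmf.1 hnab hia hrHjb.symm
  have hsum := hmin _ hmax'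
  have hnm : s(a, b) ∉ F.erase s(i, j) := fun h => hfnF (Finset.mem_of_mem_erase h)
  rw [Finset.sum_insert hnm] at hsum
  have hse : ∑ f ∈ F.erase s(i, j), x f + x s(i, j) = ∑ f ∈ F, x f :=
    Finset.sum_erase_add _ _ he
  linarith [hmf.2]


section UFun

variable (E : Finset (Sym2 (Fin n))) (x : Sym2 (Fin n) → ℝ)

noncomputable def TSet (i j : Fin n) : Finset ℝ :=
  (E.image x).filter (fun t => (SimpleGraph.fromEdgeSet
    (↑(E.filter (fun f => x f ≤ t)) : Set (Sym2 (Fin n)))).Reachable i j)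

noncomputable def bigM : ℝ :=
  (if h : (E.image x).Nonempty then (E.image x).max' h else 0) + 1

noncomputable def uFun (i j : Fin n) : ℝ :=
  if i = j then 0 else
    if h : (TSet E x i j).Nonempty then (TSet E x i j).min' h else bigM E x

lemma bigM_gt {t : ℝ} (ht : t ∈ E.image x) : t < bigM E x := by
  have h : (E.image x).Nonempty := ⟨t, ht⟩
  rw [bigM, dif_pos h]
  have := Finset.le_max' (E.image x) t ht
  linarith

lemma mem_TSet {t : ℝ} {i j : Fin n} : t ∈ TSet E x i j ↔ t ∈ E.image x ∧
    (SimpleGraph.fromEdgeSet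
      (↑(E.filter (fun f => x f ≤ t)) : Set (Sym2 (Fin n)))).Reachable i j := by
  simp only [TSet]
  exact Finset.mem_filter

lemma TSet_symm (i j : Fin n) : TSet E x i j = TSet E x j i := by
  apply Finset.ext
  intro t
  rw [mem_TSet, mem_TSet]
  exact and_congr_right (fun _ => ⟨Reachable.symm, Reachable.symm⟩)

lemma uFun_diag (i : Fin n) : uFun E x i i = 0 := if_pos rfl

lemma uFun_symm (i j : Fin n) : uFun E x i j = uFun E x j i := by
  rcases eq_or_ne i j with rfl | hij
  · rfl
  · simp only [uFun]
    rw [if_neg hij, if_neg (Ne.symm hij)]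
    simp only [TSet_symm E x i j]

lemma uFun_le_bigM {i j : Fin n} (hij : i ≠ j) : uFun E x i j ≤ bigM E x := by
  simp only [uFun]
  rw [if_neg hij]
  by_cases h : (TSet E x i j).Nonempty
  · rw [dif_pos h]
    have hmem := ((mem_TSet E x).1 ((TSet E x i j).min'_mem h)).1
    exact (bigM_gt E x hmem).le
  · rw [dif_neg h]

lemma uFun_strong {p q r : Fin n} (hpq : p ≠ q) (hqr : q ≠ r) (hpr : p ≠ r) :
    uFun E x p r ≤ max (uFun E x p q) (uFun E x q r) := by
  by_cases h1 : (TSet E x p q).Nonempty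
  · by_cases h2 : (TSet E x q r).Nonempty
    · have ht1 := (mem_TSet E x).1 ((TSet E x p q).min'_mem h1)
      have ht2 := (mem_TSet E x).1 ((TSet E x q r).min'_mem h2)
      set t1 := (TSet E x p q).min' h1 with hdt1
      set t2 := (TSet E x q r).min' h2 with hdt2
      have hmono1 : E.filter (fun f => x f ≤ t1) ⊆ E.filter (fun f => x f ≤ max t1 t2) := by
        intro f hf
        rw [Finset.mem_filter] at hf ⊢
        exact ⟨hf.1, hf.2.trans (le_max_left _ _)⟩
      have hmono2 : E.filter (fun f => x f ≤ t2) ⊆ E.filter (fun f => x f ≤ max t1 t2) := by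
        intro f hf
        rw [Finset.mem_filter] at hf ⊢
        exact ⟨hf.1, hf.2.trans (le_max_right _ _)⟩
      have hr : (SimpleGraph.fromEdgeSet
          (↑(E.filter (fun f => x f ≤ max t1 t2)) : Set (Sym2 (Fin n)))).Reachable p r :=
        (ht1.2.mono (fromEdgeSet_mono (by exact_mod_cast hmono1))).trans
          (ht2.2.mono (fromEdgeSet_mono (by exact_mod_cast hmono2)))
      have htim : max t1 t2 ∈ E.image x := by
        rcases max_choice t1 t2 with h | h
        · rw [h]; exact ht1.1
        · rw [h]; exact ht2.1
      have hmemT : max t1 t2 ∈ TSet E x p r := (mem_TSet E x).2 ⟨htim, hr⟩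
      have h3 : (TSet E x p r).Nonempty := ⟨_, hmemT⟩
      have hfin : uFun E x p r ≤ max t1 t2 := by
        simp only [uFun]
        rw [if_neg hpr, dif_pos h3]
        exact Finset.min'_le _ _ hmemT
      refine hfin.trans ?_
      have e1 : uFun E x p q = t1 := by simp only [uFun]; rw [if_neg hpq, dif_pos h1]
      have e2 : uFun E x q r = t2 := by simp only [uFun]; rw [if_neg hqr, dif_pos h2]
      rw [e1, e2]
    · have e2 : uFun E x q r = bigM E x := by simp only [uFun]; rw [if_neg hqr, dif_neg h2]
      rw [e2]
      exact (uFun_le_bigM E x hpr).trans (le_max_right _ _)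
  · have e1 : uFun E x p q = bigM E x := by simp only [uFun]; rw [if_neg hpq, dif_neg h1]
    rw [e1]
    exact (uFun_le_bigM E x hpr).trans (le_max_left _ _)

lemma uFun_ultra : IsUltra (uFun E x) := by
  refine ⟨⟨uFun_diag E x, uFun_symm E x⟩, ?_⟩
  intro i j k hij hik hjk
  have h1 : uFun E x i j ≤ max (uFun E x i k) (uFun E x j k) := by
    have := uFun_strong E x hik (fun h => hjk h.symm) hij
    rwa [uFun_symm E x k j] at this
  have h2 : uFun E x i k ≤ max (uFun E x i j) (uFun E x j k) :=
    uFun_strong E x hij hjk hik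
  have h3 : uFun E x j k ≤ max (uFun E x i j) (uFun E x i k) := by
    have := uFun_strong E x (Ne.symm hij) hik hjk
    rwa [uFun_symm E x j i] at this
  exact tri h1 h2 h3

set_option maxHeartbeats 1000000 in
lemma uFun_agree (hEd : ∀ e ∈ E, ¬ e.IsDiag) {i j : Fin n} (hij : i ≠ j)
    (hm : s(i, j) ∈ E) {F : Finset (Sym2 (Fin n))} (hF : MaxAcyclicIn E F)
    (hmin : ∀ F', MaxAcyclicIn E F' → ∑ f ∈ F, x f ≤ ∑ f ∈ F', x f)
    (heF : s(i, j) ∈ F) : uFun E x i j = x s(i, j) := by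
  have hxm : x s(i, j) ∈ E.image x := Finset.mem_image_of_mem x hm
  have hadj0 : (SimpleGraph.fromEdgeSet
      (↑(E.filter (fun f => x f ≤ x s(i, j))) : Set (Sym2 (Fin n)))).Adj i j :=
    (fromEdgeSet_adj _).2
      ⟨Finset.mem_coe.2 (Finset.mem_filter.2 ⟨hm, le_refl (x s(i, j))⟩), hij⟩
  have hrch : (SimpleGraph.fromEdgeSet
      (↑(E.filter (fun f => x f ≤ x s(i, j))) : Set (Sym2 (Fin n)))).Reachable i j :=
    hadj0.reachable
  have hmemT : x s(i, j) ∈ TSet E x i j := (mem_TSet E x).2 ⟨hxm, hrch⟩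
  have hne : (TSet E x i j).Nonempty := ⟨_, hmemT⟩
  simp only [uFun]
  rw [if_neg hij, dif_pos hne]
  refine le_antisymm (Finset.min'_le _ _ hmemT) ?_
  by_contra hlt
  push_neg at hlt
  obtain ⟨htx, htr⟩ := (mem_TSet E x).1 ((TSet E x i j).min'_mem hne)
  have hsub : E.filter (fun f => x f ≤ (TSet E x i j).min' hne) ⊆
      E.filter (fun f => x f < x s(i, j)) := by
    intro f hf
    rw [Finset.mem_filter] at hf ⊢
    exact ⟨hf.1, lt_of_le_of_lt hf.2 hlt⟩
  have hr2 := htr.mono (fromEdgeSet_mono (Finset.coe_subset.2 hsub))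
  exact no_small_reach hEd x hF hmin hij heF hr2

end UFun

end Stmt18Aux

open SimpleGraph Stmt18Aux in
/-- A partial dissimilarity map `x` on an edge set `E` over `[n]` extends to an
ultrametric on `[n]` if and only if every edge of `E` lies in some `x`-minimum maximal
acyclic subset of `E` (i.e. `x` is an `M(G)`-ultrametric). -/
theorem stmt18 (n : ℕ) (hn : 2 ≤ n) (E : Finset (Sym2 (Fin n)))
    (hEd : ∀ e ∈ E, ¬ e.IsDiag) (x : Sym2 (Fin n) → ℝ) :
    (∃ u : Fin n → Fin n → ℝ, IsUltra u ∧
        ∀ i j : Fin n, i ≠ j → s(i, j) ∈ E → u i j = x s(i, j)) ↔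
      ∀ e ∈ E, ∃ F : Finset (Sym2 (Fin n)), MaxAcyclicIn E F ∧
        (∀ F' : Finset (Sym2 (Fin n)), MaxAcyclicIn E F' →
          ∑ f ∈ F, x f ≤ ∑ f ∈ F', x f) ∧ e ∈ F := by
  constructor
  · -- forward direction
    rintro ⟨u, hu, hagree⟩ e heE
    revert heE
    induction e using Sym2.ind with
    | _ i j =>
      intro heE
      obtain ⟨F0, hF0⟩ := exists_maxAcyclic E
      obtain ⟨F, hFmem, hFmin⟩ := Finset.exists_min_image
        (E.powerset.filter (fun F => MaxAcyclicIn E F)) (fun F => ∑ f ∈ F, x f)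
        ⟨F0, Finset.mem_filter.2 ⟨Finset.mem_powerset.2 hF0.1, hF0⟩⟩
      have hF : MaxAcyclicIn E F := (Finset.mem_filter.1 hFmem).2
      have hmin : ∀ F', MaxAcyclicIn E F' → ∑ f ∈ F, x f ≤ ∑ f ∈ F', x f := fun F' h =>
        hFmin F' (Finset.mem_filter.2 ⟨Finset.mem_powerset.2 h.1, h⟩)
      have hij : i ≠ j := by
        have := hEd _ heE
        simpa [Sym2.mk_isDiag_iff] using this
      by_cases heF : s(i, j) ∈ F
      · exact ⟨F, hF, hmin, heF⟩
      · obtain ⟨hFE, hFac, hFreach⟩ := (maxAcyclic_iff hEd).1 hF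
        have hreach := hFreach i j hij heE
        -- no cheap bypass within F
        have hnSmall : ¬ (SimpleGraph.fromEdgeSet
            (↑(F.filter (fun f => x f < x s(i, j))) : Set (Sym2 (Fin n)))).Reachable i j := by
          intro hr
          obtain ⟨q⟩ := hr
          have hqedge : ∀ a b : Fin n, s(a, b) ∈ q.edges →
              s(a, b) ∈ F ∧ x s(a, b) < x s(i, j) ∧ a ≠ b := by
            intro a b hm
            have h' := (fromEdgeSet_adj _).1 (q.adj_of_mem_edges hm)
            rw [Finset.mem_coe, Finset.mem_filter] at h'
            exact ⟨h'.1.1, h'.1.2, h'.2⟩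
          have hqne : q.edges ≠ [] := by
            intro h0
            cases q with
            | nil => exact hij rfl
            | cons h q => simp [SimpleGraph.Walk.edges_cons] at h0
          obtain ⟨f0, hf0⟩ := List.exists_mem_of_ne_nil _ hqne
          have hsne : (q.edges.toFinset.image x).Nonempty :=
            ⟨x f0, Finset.mem_image_of_mem x (List.mem_toFinset.2 hf0)⟩
          set t := (q.edges.toFinset.image x).max' hsne with ht
          have hb : ∀ a b : Fin n, s(a, b) ∈ q.edges → u a b ≤ t := by
            intro a b hm
            obtain ⟨h1, h2, h4⟩ := hqedge a b hm
            rw [hagree a b h4 (hFE h1)]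
            exact Finset.le_max' _ _ (Finset.mem_image_of_mem x (List.mem_toFinset.2 hm))
          rcases ultra_walk_bound hu q t hb with rfl | hle
          · exact hij rfl
          · obtain ⟨f1, hf1m, hf1⟩ := Finset.mem_image.1 ((q.edges.toFinset.image x).max'_mem hsne)
            have hlt : x f1 < x s(i, j) := by
              revert hf1m
              induction f1 using Sym2.ind with
              | _ a b =>
                intro hf1m
                exact (hqedge a b (List.mem_toFinset.1 hf1m)).2.1
            have huij : u i j = x s(i, j) := hagree i j hij heE
            rw [huij] at hle
            rw [hf1] at hlt
            linarith
        obtain ⟨p0⟩ := hreach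
        set pp := p0.toPath with hpp
        obtain ⟨a, b, hmem, hia', hib'⟩ := walk_cross (pp : (SimpleGraph.fromEdgeSet
          (↑F : Set (Sym2 (Fin n)))).Walk i j) hnSmall
        have hadjF := SimpleGraph.Walk.adj_of_mem_edges _ hmem
        have habne : a ≠ b := hadjF.ne
        have hfF : s(a, b) ∈ F := Finset.mem_coe.1 ((fromEdgeSet_adj _).1 hadjF).1
        have hxge : x s(i, j) ≤ x s(a, b) := by
          by_contra hlt
          push_neg at hlt
          exact hib' (hia'.trans ((fromEdgeSet_adj _).2
            ⟨Finset.mem_coe.2 (Finset.mem_filter.2 ⟨hfF, hlt⟩), habne⟩).reachable)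
        have hH'le : (SimpleGraph.fromEdgeSet
            (↑(F.erase s(a, b)) : Set (Sym2 (Fin n)))) ≤
            SimpleGraph.fromEdgeSet (↑F : Set (Sym2 (Fin n))) :=
          fromEdgeSet_mono (by exact_mod_cast F.erase_subset _)
        have hnr' : ¬ (SimpleGraph.fromEdgeSet
            (↑(F.erase s(a, b)) : Set (Sym2 (Fin n)))).Reachable i j := by
          intro hr'
          obtain ⟨w0⟩ := hr'
          set w := w0.toPath with hw
          have hwp : ((w : (SimpleGraph.fromEdgeSet
              (↑(F.erase s(a, b)) : Set (Sym2 (Fin n)))).Walk i j).mapLe hH'le).IsPath :=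
            (SimpleGraph.Walk.mapLe_isPath hH'le).2 w.2
          have hEqP : pp = ⟨_, hwp⟩ := hFac.path_unique pp ⟨_, hwp⟩
          have hwalks : (pp : (SimpleGraph.fromEdgeSet
              (↑F : Set (Sym2 (Fin n)))).Walk i j) = ((w : (SimpleGraph.fromEdgeSet
              (↑(F.erase s(a, b)) : Set (Sym2 (Fin n)))).Walk i j).mapLe hH'le) :=
            congrArg Subtype.val hEqP
          have hmem2 : s(a, b) ∈ ((w : (SimpleGraph.fromEdgeSet
              (↑(F.erase s(a, b)) : Set (Sym2 (Fin n)))).Walk i j).mapLe hH'le).edges := by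
            rw [← hwalks]; exact hmem
          have hEdges : ((w : (SimpleGraph.fromEdgeSet
              (↑(F.erase s(a, b)) : Set (Sym2 (Fin n)))).Walk i j).mapLe hH'le).edges =
              (w : (SimpleGraph.fromEdgeSet
              (↑(F.erase s(a, b)) : Set (Sym2 (Fin n)))).Walk i j).edges := by
            have hid : ⇑(SimpleGraph.Hom.ofLE hH'le) = id := rfl
            simp only [SimpleGraph.Walk.mapLe, SimpleGraph.Walk.edges_map, hid,
              Sym2.map_id, List.map_id]
          rw [hEdges] at hmem2
          have hsub := SimpleGraph.Walk.edges_subset_edgeSet _ hmem2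
          rw [edgeSet_fromEdgeSet] at hsub
          exact (Finset.mem_erase.1 (Finset.mem_coe.1 hsub.1)).1 rfl
        have hrF : (SimpleGraph.fromEdgeSet (↑F : Set (Sym2 (Fin n)))).Reachable i j :=
          hFreach i j hij heE
        rw [graph_erase_sup hfF] at hrF
        have hkey : MaxAcyclicIn E (insert s(i, j) (F.erase s(a, b))) := by
          rcases reach_sup_edge hrF with r0 | ⟨r1, r2⟩ | ⟨r1, r2⟩
          · exact absurd r0 hnr'
          · exact swap_max hEd hF hfF hij heE hnr' r1.symm r2.symm
          · have hswap : s(a, b) = s(b, a) := Sym2.eq_swap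
            have hkey' := swap_max hEd hF (hswap ▸ hfF) hij heE
              (by rw [← hswap]; exact hnr') (by rw [← hswap]; exact r1.symm)
              (by rw [← hswap]; exact r2.symm)
            rwa [← hswap] at hkey'
        refine ⟨insert s(i, j) (F.erase s(a, b)), hkey, fun F'' h'' => ?_,
          Finset.mem_insert_self _ _⟩
        have hnm : s(i, j) ∉ F.erase s(a, b) := fun h => heF (Finset.mem_of_mem_erase h)
        have hsum : ∑ f ∈ insert s(i, j) (F.erase s(a, b)), x f ≤ ∑ f ∈ F, x f := by
          rw [Finset.sum_insert hnm]
          have hse : ∑ f ∈ F.erase s(a, b), x f + x s(a, b) = ∑ f ∈ F, x f :=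
            Finset.sum_erase_add _ _ hfF
          linarith
        exact hsum.trans (hmin _ h'')
  · -- backward direction
    intro hyp
    refine ⟨uFun E x, uFun_ultra E x, fun i j hij hm => ?_⟩
    obtain ⟨F, h1, h2, h3⟩ := hyp s(i, j) hm
    exact uFun_agree E x hEd hij hm h1 h2 h3
end

section
/- Let n ≥ 2, let E be a set of 2-element subsets of [n] = {1,…,n}, let e₀ be a 2-element subset of [n] with e₀ ∉ E, and let x : E → ℝ be such that every edge of E lies in some x-minimum maximal acyclic subset of E. Then there exists t ∈ ℝ such that, defining x′ on E ∪ {e₀} by x′(e₀) = t and x′(e) = x(e) for e ∈ E, every edge of E ∪ {e₀} lies in some x′-minimum maximal acyclic subset of E ∪ {e₀}. -/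
open SimpleGraph

set_option linter.unusedSectionVars false
variable {V : Type*} [DecidableEq V]

lemma gr_adj {F : Finset (Sym2 V)} {a b : V} :
    (fromEdgeSet (↑F : Set (Sym2 V))).Adj a b ↔ s(a,b) ∈ F ∧ a ≠ b := by
  simp [fromEdgeSet_adj]

lemma gr_erase (F : Finset (Sym2 V)) (g : Sym2 V) :
    fromEdgeSet (↑(F.erase g) : Set (Sym2 V)) =
      fromEdgeSet (↑F : Set (Sym2 V)) \ fromEdgeSet {g} := by
  ext a b
  simp only [gr_adj, Finset.mem_erase, sdiff_adj, fromEdgeSet_adj, Set.mem_singleton_iff,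
    Finset.mem_coe, Finset.coe_erase, Set.mem_diff]
  tauto

lemma acyclic_mono {G H : SimpleGraph V} (h : H ≤ G) (hG : G.IsAcyclic) : H.IsAcyclic := by
  intro v c hc
  exact hG (c.map (Hom.ofLE h)) (hc.map (fun a b hab => hab))

lemma walk_avoid {G : SimpleGraph V} {u v : V} (p : G.Walk u v) {g : Sym2 V}
    (h : g ∉ p.edges) : (G \ fromEdgeSet {g}).Reachable u v := by
  induction p with
  | nil => exact Reachable.refl _
  | @cons a b c hadj q ih =>
    simp only [Walk.edges_cons, List.mem_cons, not_or] at h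
    have h1 : (G \ fromEdgeSet {g}).Adj a b := by
      simp only [sdiff_adj, fromEdgeSet_adj, Set.mem_singleton_iff]
      exact ⟨hadj, fun hh => h.1 hh.1.symm⟩
    exact h1.reachable.trans (ih h.2)

lemma walk_three {G : SimpleGraph V} {a b : V} {u v : V} (p : G.Walk u v) :
    (G \ fromEdgeSet {s(a,b)}).Reachable u v ∨
    ((G \ fromEdgeSet {s(a,b)}).Reachable u a ∧ (G \ fromEdgeSet {s(a,b)}).Reachable b v) ∨
    ((G \ fromEdgeSet {s(a,b)}).Reachable u b ∧ (G \ fromEdgeSet {s(a,b)}).Reachable a v) := by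
  set H := G \ fromEdgeSet {s(a,b)} with hH
  induction p with
  | nil => exact Or.inl (Reachable.refl _)
  | @cons c d e hadj q ih =>
    by_cases hg : s(c,d) = s(a,b)
    · rw [Sym2.eq_iff] at hg
      rcases hg with ⟨rfl, rfl⟩ | ⟨rfl, rfl⟩
      · rcases ih with h1 | ⟨h1, h2⟩ | ⟨h1, h2⟩
        · exact Or.inr (Or.inl ⟨Reachable.refl _, h1⟩)
        · exact Or.inr (Or.inl ⟨Reachable.refl _, h2⟩)
        · exact Or.inl h2
      · rcases ih with h1 | ⟨h1, h2⟩ | ⟨h1, h2⟩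
        · exact Or.inr (Or.inr ⟨Reachable.refl _, h1⟩)
        · exact Or.inl h2
        · exact Or.inr (Or.inr ⟨Reachable.refl _, h2⟩)
    · have h1 : H.Adj c d := by
        rw [hH]
        simp only [sdiff_adj, fromEdgeSet_adj, Set.mem_singleton_iff]
        exact ⟨hadj, fun hh => hg hh.1⟩
      rcases ih with h2 | ⟨h2, h3⟩ | ⟨h2, h3⟩
      · exact Or.inl (h1.reachable.trans h2)
      · exact Or.inr (Or.inl ⟨h1.reachable.trans h2, h3⟩)
      · exact Or.inr (Or.inr ⟨h1.reachable.trans h2, h3⟩)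

lemma path_split {G : SimpleGraph V} {a b : V} {u v : V} (p : G.Walk u v)
    (hp : p.IsPath) (hab : s(a,b) ∈ p.edges) :
    ((G \ fromEdgeSet {s(a,b)}).Reachable u a ∧ (G \ fromEdgeSet {s(a,b)}).Reachable b v) ∨
    ((G \ fromEdgeSet {s(a,b)}).Reachable u b ∧ (G \ fromEdgeSet {s(a,b)}).Reachable a v) := by
  induction p with
  | nil => simp at hab
  | @cons c d e hadj q ih =>
    rw [Walk.cons_isPath_iff] at hp
    rw [Walk.edges_cons, List.mem_cons] at hab
    rcases hab with hab | hab
    · have hgq : s(a,b) ∉ q.edges := by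
        intro hmem
        rw [hab] at hmem
        exact hp.2 (q.fst_mem_support_of_mem_edges hmem)
      have hr := walk_avoid q hgq
      rw [Sym2.eq_iff] at hab
      rcases hab with ⟨rfl, rfl⟩ | ⟨rfl, rfl⟩
      · exact Or.inl ⟨Reachable.refl _, hr⟩
      · exact Or.inr ⟨Reachable.refl _, hr⟩

    · have h1 : (G \ fromEdgeSet {s(a,b)}).Adj c d := by
        simp only [sdiff_adj, fromEdgeSet_adj, Set.mem_singleton_iff]
        refine ⟨hadj, fun hh => ?_⟩
        rw [← hh.1] at hab
        exact hp.2 (q.fst_mem_support_of_mem_edges hab)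
      rcases ih hp.1 hab with ⟨h2, h3⟩ | ⟨h2, h3⟩
      · exact Or.inl ⟨h1.reachable.trans h2, h3⟩
      · exact Or.inr ⟨h1.reachable.trans h2, h3⟩

lemma walk_cross {G : SimpleGraph V} {u v : V} (p : G.Walk u v) (S : Set V)
    (hu : u ∈ S) (hv : v ∉ S) : ∃ a b, s(a,b) ∈ p.edges ∧ a ∈ S ∧ b ∉ S := by
  induction p with
  | nil => exact absurd hu hv
  | @cons c d e hadj q ih =>
    by_cases hd : d ∈ S
    · obtain ⟨a, b, h1, h2, h3⟩ := ih hd hv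
      exact ⟨a, b, by simp [h1], h2, h3⟩
    · exact ⟨c, d, by simp, hu, hd⟩

lemma reach_lift {G H : SimpleGraph V} (hGH : ∀ a b, G.Adj a b → H.Reachable a b)
    {u v : V} (h : G.Reachable u v) : H.Reachable u v := by
  obtain ⟨p⟩ := h
  induction p with
  | nil => exact Reachable.refl _
  | @cons c d e hadj q ih => exact (hGH _ _ hadj).trans ih

lemma insert_acyclic {F : Finset (Sym2 V)} {a b : V}
    (hF : (fromEdgeSet (↑F : Set (Sym2 V))).IsAcyclic) (hab : a ≠ b)
    (hr : ¬ (fromEdgeSet (↑F : Set (Sym2 V))).Reachable a b) :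
    (fromEdgeSet (↑(insert s(a,b) F) : Set (Sym2 V))).IsAcyclic := by
  set K := fromEdgeSet (↑(insert s(a,b) F) : Set (Sym2 V)) with hK
  rw [isAcyclic_iff_forall_adj_isBridge]
  intro p q hpq
  rw [isBridge_iff]
  intro hre
  have hpqF : s(p,q) ∈ insert s(a,b) F ∧ p ≠ q := gr_adj.mp hpq
  by_cases hg : s(p,q) = s(a,b)
  · -- K minus this edge is ≤ graph of F
    have hle : K \ fromEdgeSet {s(p,q)} ≤ fromEdgeSet (↑F : Set (Sym2 V)) := by
      intro c d hcd
      simp only [sdiff_adj, hK, gr_adj, fromEdgeSet_adj, Set.mem_singleton_iff,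
        Finset.mem_coe, Finset.mem_insert] at hcd ⊢
      rcases hcd with ⟨⟨h1 | h1, h2⟩, h3⟩
      · exact absurd ⟨h1.trans hg.symm, h2⟩ h3
      · exact ⟨h1, h2⟩
    have : (fromEdgeSet (↑F : Set (Sym2 V))).Reachable p q := hre.mono hle
    rw [Sym2.eq_iff] at hg
    rcases hg with ⟨rfl, rfl⟩ | ⟨rfl, rfl⟩
    · exact hr this
    · exact hr this.symm
  · -- s(p,q) ∈ F
    have hpF : s(p,q) ∈ F := by
      rcases Finset.mem_insert.mp hpqF.1 with h | h
      · exact absurd h hg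
      · exact h
    have hbr : ¬ (fromEdgeSet (↑F : Set (Sym2 V)) \ fromEdgeSet {s(p,q)}).Reachable p q := by
      have := (isAcyclic_iff_forall_adj_isBridge.mp hF) (gr_adj.mpr ⟨hpF, hpqF.2⟩)
      exact isBridge_iff.mp this
    obtain ⟨w⟩ := hre
    have hle2 : (K \ fromEdgeSet {s(p,q)}) \ fromEdgeSet {s(a,b)} ≤
        fromEdgeSet (↑F : Set (Sym2 V)) \ fromEdgeSet {s(p,q)} := by
      intro c d hcd
      simp only [sdiff_adj, hK, gr_adj, fromEdgeSet_adj, Set.mem_singleton_iff,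
        Finset.mem_coe, Finset.mem_insert] at hcd ⊢
      rcases hcd with ⟨⟨⟨h1 | h1, h2⟩, h3⟩, h4⟩
      · exact absurd ⟨h1, h2⟩ h4
      · exact ⟨⟨h1, h2⟩, h3⟩
    have hFle : fromEdgeSet (↑F : Set (Sym2 V)) \ fromEdgeSet {s(p,q)} ≤
        fromEdgeSet (↑F : Set (Sym2 V)) := sdiff_le
    have hpq' : (fromEdgeSet (↑F : Set (Sym2 V))).Reachable p q :=
      (gr_adj.mpr ⟨hpF, hpqF.2⟩).reachable
    rcases walk_three (a := a) (b := b) w with h1 | ⟨h1, h2⟩ | ⟨h1, h2⟩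
    · exact hbr (h1.mono hle2)
    · exact hr (((h1.mono hle2).mono hFle).symm.trans
        (hpq'.trans ((h2.mono hle2).mono hFle).symm))
    · exact hr (((h2.mono hle2).mono hFle).trans
        (hpq'.symm.trans ((h1.mono hle2).mono hFle)))



/-- Every edge of `E` lies in some `x`-minimum maximal acyclic subset of `E`, i.e.
`x` is an ultrametric for the graphic matroid of `([n], E)`. -/
def GraphUltra {n : ℕ} (E : Finset (Sym2 (Fin n))) (x : Sym2 (Fin n) → ℝ) : Prop :=
  ∀ e ∈ E, ∃ F : Finset (Sym2 (Fin n)), MaxAcyclicIn E F ∧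
    (∀ F' : Finset (Sym2 (Fin n)), MaxAcyclicIn E F' →
      ∑ f ∈ F, x f ≤ ∑ f ∈ F', x f) ∧ e ∈ F

lemma max_reach {n : ℕ} {E F : Finset (Sym2 (Fin n))} (hEd : ∀ e ∈ E, ¬ e.IsDiag)
    (hM : MaxAcyclicIn E F) {a b : Fin n} (hab : s(a,b) ∈ E) :
    (fromEdgeSet (↑F : Set (Sym2 (Fin n)))).Reachable a b := by
  have hne : a ≠ b := by
    have := hEd _ hab
    rwa [Sym2.mk_isDiag_iff] at this
  by_contra hr
  have hacy := insert_acyclic hM.2.1 hne hr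
  have hsub : insert s(a,b) F ⊆ E := Finset.insert_subset hab hM.1
  have heq := hM.2.2 _ (Finset.subset_insert _ _) hsub hacy
  have : s(a,b) ∈ F := heq ▸ Finset.mem_insert_self _ _
  exact hr (gr_adj.mpr ⟨this, hne⟩).reachable

lemma max_of_reach {n : ℕ} {E F : Finset (Sym2 (Fin n))} (hEd : ∀ e ∈ E, ¬ e.IsDiag)
    (hFE : F ⊆ E) (hFa : (fromEdgeSet (↑F : Set (Sym2 (Fin n)))).IsAcyclic)
    (h : ∀ a b : Fin n, s(a,b) ∈ E → (fromEdgeSet (↑F : Set (Sym2 (Fin n)))).Reachable a b) :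
    MaxAcyclicIn E F := by
  refine ⟨hFE, hFa, fun F' hFF' hF'E hF'a => ?_⟩
  refine Finset.Subset.antisymm ?_ hFF'
  intro e he
  by_contra heF
  induction e using Sym2.ind with
  | _ a b =>
    have hne : a ≠ b := by
      have := hEd _ (hF'E he)
      rwa [Sym2.mk_isDiag_iff] at this
    have hFsub : F ⊆ F'.erase s(a,b) := fun f hf =>
      Finset.mem_erase.mpr ⟨fun hh => heF (hh ▸ hf), hFF' hf⟩
    have hreach : (fromEdgeSet (↑(F'.erase s(a,b)) : Set (Sym2 (Fin n)))).Reachable a b :=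
      (h a b (hF'E he)).mono (fromEdgeSet_mono (by exact_mod_cast hFsub))
    rw [gr_erase] at hreach
    have hadj : (fromEdgeSet (↑F' : Set (Sym2 (Fin n)))).Adj a b := gr_adj.mpr ⟨he, hne⟩
    have := (isAcyclic_iff_forall_adj_isBridge.mp hF'a) hadj
    exact isBridge_iff.mp this hreach

lemma bot_acyclic : (⊥ : SimpleGraph V).IsAcyclic := by
  intro v c hc
  cases c with
  | nil => exact hc.ne_nil rfl
  | cons h q => exact h

lemma exists_min_forest {n : ℕ} (E : Finset (Sym2 (Fin n))) (x : Sym2 (Fin n) → ℝ) :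
    ∃ F, MaxAcyclicIn E F ∧ ∀ F', MaxAcyclicIn E F' →
      ∑ f ∈ F, x f ≤ ∑ f ∈ F', x f := by
  classical
  -- first, a maximal acyclic subset exists
  have hne : (E.powerset.filter
      (fun F : Finset (Sym2 (Fin n)) => (fromEdgeSet (↑F : Set (Sym2 (Fin n)))).IsAcyclic)).Nonempty := by
    refine ⟨∅, ?_⟩
    simp only [Finset.mem_filter, Finset.mem_powerset, Finset.empty_subset, true_and,
      Finset.coe_empty, fromEdgeSet_empty]
    exact bot_acyclic
  obtain ⟨F, hF, hFmax⟩ := Finset.exists_max_image _ Finset.card hne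
  rw [Finset.mem_filter, Finset.mem_powerset] at hF
  have hM : MaxAcyclicIn E F := by
    refine ⟨hF.1, hF.2, fun F' h1 h2 h3 => ?_⟩
    have := hFmax F' (by rw [Finset.mem_filter, Finset.mem_powerset]; exact ⟨h2, h3⟩)
    exact (Finset.eq_of_subset_of_card_le h1 this).symm
  have hne2 : (E.powerset.filter (fun F => MaxAcyclicIn E F)).Nonempty :=
    ⟨F, by rw [Finset.mem_filter, Finset.mem_powerset]; exact ⟨hM.1, hM⟩⟩
  obtain ⟨F₀, hF₀, hmin⟩ := Finset.exists_min_image _ (fun F => ∑ f ∈ F, x f) hne2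
  rw [Finset.mem_filter] at hF₀
  exact ⟨F₀, hF₀.2, fun F' hF' => hmin F' (by
    rw [Finset.mem_filter, Finset.mem_powerset]; exact ⟨hF'.1, hF'⟩)⟩

lemma walk_edges_ne_nil {G : SimpleGraph V} {u v : V} (p : G.Walk u v) (h : u ≠ v) :
    p.edges ≠ [] := by
  cases p with
  | nil => exact absurd rfl h
  | cons hadj q => simp

lemma mem_of_walk_edge {F : Finset (Sym2 V)} {u v : V}
    {p : (fromEdgeSet (↑F : Set (Sym2 V))).Walk u v} {g : Sym2 V} (hg : g ∈ p.edges) :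
    g ∈ F := by
  have := p.edges_subset_edgeSet hg
  rw [edgeSet_fromEdgeSet] at this
  exact_mod_cast this.1

lemma max_insert_of_max {n : ℕ} {E F : Finset (Sym2 (Fin n))} {u v : Fin n}
    (hEd : ∀ e ∈ E, ¬ e.IsDiag) (hEd' : ∀ e ∈ insert s(u,v) E, ¬ e.IsDiag)
    (hM : MaxAcyclicIn E F)
    (hr : (fromEdgeSet (↑F : Set (Sym2 (Fin n)))).Reachable u v) :
    MaxAcyclicIn (insert s(u,v) E) F := by
  refine max_of_reach hEd' (hM.1.trans (Finset.subset_insert _ _)) hM.2.1 ?_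
  intro a b hab
  rcases Finset.mem_insert.mp hab with h | h
  · rw [Sym2.eq_iff] at h
    rcases h with ⟨rfl, rfl⟩ | ⟨rfl, rfl⟩
    · exact hr
    · exact hr.symm
  · exact max_reach hEd hM h

lemma lower_bound {n : ℕ} {E F₀ F' : Finset (Sym2 (Fin n))} {u v : Fin n}
    {x : Sym2 (Fin n) → ℝ} {t : ℝ}
    (hEd : ∀ e ∈ E, ¬ e.IsDiag) (hEd' : ∀ e ∈ insert s(u,v) E, ¬ e.IsDiag)
    (huv : u ≠ v)
    (hF₀ : MaxAcyclicIn E F₀)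
    (hmin : ∀ F'', MaxAcyclicIn E F'' → ∑ f ∈ F₀, x f ≤ ∑ f ∈ F'', x f)
    (p : (fromEdgeSet (↑F₀ : Set (Sym2 (Fin n)))).Walk u v)
    (ht : ∀ g ∈ p.edges, x g ≤ t)
    (hF' : MaxAcyclicIn (insert s(u,v) E) F') (he₀F' : s(u,v) ∈ F') :
    ∑ f ∈ F₀, x f ≤ ∑ f ∈ F', (fun e => if e = s(u,v) then t else x e) f := by
  classical
  set x' : Sym2 (Fin n) → ℝ := fun e => if e = s(u,v) then t else x e with hx'
  set F'' := F'.erase s(u,v) with hF''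
  have hgr : fromEdgeSet (↑F'' : Set (Sym2 (Fin n))) =
      fromEdgeSet (↑F' : Set (Sym2 (Fin n))) \ fromEdgeSet {s(u,v)} := gr_erase F' s(u,v)
  have hadjuv : (fromEdgeSet (↑F' : Set (Sym2 (Fin n)))).Adj u v := gr_adj.mpr ⟨he₀F', huv⟩
  have hbruv : ¬ (fromEdgeSet (↑F'' : Set (Sym2 (Fin n)))).Reachable u v := by
    rw [hgr]
    exact isBridge_iff.mp ((isAcyclic_iff_forall_adj_isBridge.mp hF'.2.1) hadjuv)
  obtain ⟨a, b, hab, haS, hbS⟩ := walk_cross p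
    {w | (fromEdgeSet (↑F'' : Set (Sym2 (Fin n)))).Reachable u w} (Reachable.refl _) hbruv
  simp only [Set.mem_setOf_eq] at haS hbS
  have hgF₀ : s(a,b) ∈ F₀ := mem_of_walk_edge hab
  have hgE : s(a,b) ∈ E := hF₀.1 hgF₀
  have hne : a ≠ b := by have := hEd _ hgE; rwa [Sym2.mk_isDiag_iff] at this
  have hnr : ¬ (fromEdgeSet (↑F'' : Set (Sym2 (Fin n)))).Reachable a b :=
    fun h => hbS (haS.trans h)
  have hgF'' : s(a,b) ∉ F'' := fun h => hnr (gr_adj.mpr ⟨h, hne⟩).reachable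
  have hF''le : fromEdgeSet (↑F'' : Set (Sym2 (Fin n))) ≤
      fromEdgeSet (↑F' : Set (Sym2 (Fin n))) :=
    fromEdgeSet_mono (by exact_mod_cast Finset.erase_subset _ _)
  have hF''a : (fromEdgeSet (↑F'' : Set (Sym2 (Fin n)))).IsAcyclic :=
    acyclic_mono hF''le hF'.2.1
  have hG₂a := insert_acyclic hF''a hne hnr
  have hF''E : F'' ⊆ E := by
    intro f hf
    rcases Finset.mem_erase.mp hf with ⟨hfne, hfF'⟩
    rcases Finset.mem_insert.mp (hF'.1 hfF') with h | h
    · exact absurd h hfne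
    · exact h
  have hG₂E : insert s(a,b) F'' ⊆ E := Finset.insert_subset hgE hF''E
  -- b is reachable from v in F''
  have hub : (fromEdgeSet (↑F' : Set (Sym2 (Fin n)))).Reachable u b := by
    have hbsup : b ∈ p.support := p.snd_mem_support_of_mem_edges hab
    have h0 : (fromEdgeSet (↑F₀ : Set (Sym2 (Fin n)))).Reachable u b := ⟨p.takeUntil b hbsup⟩
    refine reach_lift (fun c d hcd => ?_) h0
    exact max_reach hEd' hF' (Finset.mem_insert_of_mem (hF₀.1 (gr_adj.mp hcd).1))
  have hvb : (fromEdgeSet (↑F'' : Set (Sym2 (Fin n)))).Reachable v b := by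
    obtain ⟨q⟩ := hub
    rcases walk_three (a := u) (b := v) q with h1 | ⟨h1, h2⟩ | ⟨h1, h2⟩
    · rw [← hgr] at h1; exact absurd h1 hbS
    · rw [← hgr] at h2; exact h2
    · rw [← hgr] at h1; exact absurd h1 hbruv
  have hle₂ : fromEdgeSet (↑F'' : Set (Sym2 (Fin n))) ≤
      fromEdgeSet (↑(insert s(a,b) F'') : Set (Sym2 (Fin n))) :=
    fromEdgeSet_mono (by exact_mod_cast Finset.subset_insert _ _)
  have huvG₂ : ∀ c d : Fin n, (fromEdgeSet (↑F' : Set (Sym2 (Fin n)))).Adj c d →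
      (fromEdgeSet (↑(insert s(a,b) F'') : Set (Sym2 (Fin n)))).Reachable c d := by
    intro c d hcd
    obtain ⟨hmem, hne'⟩ := gr_adj.mp hcd
    by_cases hcd0 : s(c,d) = s(u,v)
    · have hR : (fromEdgeSet (↑(insert s(a,b) F'') : Set (Sym2 (Fin n)))).Reachable u v := by
        have h1 : (fromEdgeSet (↑(insert s(a,b) F'') : Set (Sym2 (Fin n)))).Adj a b :=
          gr_adj.mpr ⟨Finset.mem_insert_self _ _, hne⟩
        exact ((haS.mono hle₂).trans (h1.reachable.trans (hvb.mono hle₂).symm))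
      rw [Sym2.eq_iff] at hcd0
      rcases hcd0 with ⟨rfl, rfl⟩ | ⟨rfl, rfl⟩
      · exact hR
      · exact hR.symm
    · have : s(c,d) ∈ F'' := Finset.mem_erase.mpr ⟨hcd0, hmem⟩
      exact (gr_adj.mpr ⟨Finset.mem_insert_of_mem this, hne'⟩).reachable
  have hG₂max : MaxAcyclicIn E (insert s(a,b) F'') := by
    refine max_of_reach hEd hG₂E hG₂a (fun c d hcd => ?_)
    exact reach_lift huvG₂ (max_reach hEd' hF' (Finset.mem_insert_of_mem hcd))
  have h1 : ∑ f ∈ insert s(a,b) F'', x f = x s(a,b) + ∑ f ∈ F'', x f :=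
    Finset.sum_insert hgF''
  have h2 : x' s(u,v) + ∑ f ∈ F'', x' f = ∑ f ∈ F', x' f :=
    Finset.add_sum_erase _ _ he₀F'
  have h3 : ∑ f ∈ F'', x' f = ∑ f ∈ F'', x f :=
    Finset.sum_congr rfl (fun f hf => if_neg (Finset.mem_erase.mp hf).1)
  have h4 := hmin _ hG₂max
  have h5 : x s(a,b) ≤ t := ht _ hab
  have h6 : x' s(u,v) = t := if_pos rfl
  rw [h1] at h4
  show ∑ f ∈ F₀, x f ≤ ∑ f ∈ F', x' f
  linarith

/-- If `x : E → ℝ` is an `M(G)`-ultrametric (every edge lies in some `x`-minimum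
spanning forest of `E`) and `e₀ ∉ E` is another 2-element subset of `[n]`, then the
weight of `e₀` can be chosen so that the extension is an ultrametric for the graphic
matroid of `([n], E ∪ {e₀})`. -/
theorem stmt19 (n : ℕ) (hn : 2 ≤ n) (E : Finset (Sym2 (Fin n)))
    (hEd : ∀ e ∈ E, ¬ e.IsDiag) (e₀ : Sym2 (Fin n)) (he₀d : ¬ e₀.IsDiag)
    (he₀ : e₀ ∉ E) (x : Sym2 (Fin n) → ℝ) (hx : GraphUltra E x) :
    ∃ t : ℝ, GraphUltra (insert e₀ E) (fun e => if e = e₀ then t else x e) := by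
  classical
  induction e₀ using Sym2.ind with
  | _ u v =>
  have huv : u ≠ v := fun h => he₀d (Sym2.mk_isDiag_iff.mpr h)
  have hEd' : ∀ e ∈ insert s(u,v) E, ¬ e.IsDiag := by
    intro e he
    rcases Finset.mem_insert.mp he with rfl | he
    · exact he₀d
    · exact hEd e he
  obtain ⟨F₀, hF₀, hmin⟩ := exists_min_forest E x
  by_cases hc : (fromEdgeSet (↑E : Set (Sym2 (Fin n)))).Reachable u v
  · -- Case B : endpoints of the new edge are already connected in E
    have hrF₀ : (fromEdgeSet (↑F₀ : Set (Sym2 (Fin n)))).Reachable u v :=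
      reach_lift (fun a b hab => max_reach hEd hF₀ (gr_adj.mp hab).1) hc
    obtain ⟨p0⟩ := hrF₀
    obtain ⟨p, hp⟩ := p0.toPath
    have hpe : p.edges ≠ [] := walk_edges_ne_nil p huv
    obtain ⟨g0, hg0⟩ := List.exists_mem_of_ne_nil _ hpe
    obtain ⟨g_max, hgm, hgmax⟩ := Finset.exists_max_image p.edges.toFinset x
      ⟨g0, List.mem_toFinset.mpr hg0⟩
    rw [List.mem_toFinset] at hgm
    have hgmax' : ∀ g ∈ p.edges, x g ≤ x g_max := fun g hg =>
      hgmax g (List.mem_toFinset.mpr hg)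
    refine ⟨x g_max, ?_⟩
    set x' : Sym2 (Fin n) → ℝ := fun e => if e = s(u,v) then x g_max else x e with hx'
    have claim1 : ∀ F', MaxAcyclicIn (insert s(u,v) E) F' →
        ∑ f ∈ F₀, x f ≤ ∑ f ∈ F', x' f := by
      intro F' hF'
      by_cases he0 : s(u,v) ∈ F'
      · exact lower_bound hEd hEd' huv hF₀ hmin p hgmax' hF' he0
      · have hF'E : F' ⊆ E := by
          intro f hf
          rcases Finset.mem_insert.mp (hF'.1 hf) with rfl | h
          · exact absurd hf he0
          · exact h
        have hM : MaxAcyclicIn E F' := max_of_reach hEd hF'E hF'.2.1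
          (fun a b hab => max_reach hEd' hF' (Finset.mem_insert_of_mem hab))
        calc ∑ f ∈ F₀, x f ≤ ∑ f ∈ F', x f := hmin F' hM
          _ = ∑ f ∈ F', x' f := (Finset.sum_congr rfl (fun f hf =>
              (if_neg (fun (h : f = s(u,v)) => he0 (h ▸ hf))).symm))
    -- the special forest F₁ containing the new edge
    obtain ⟨a₀, b₀, hgrep⟩ : ∃ a b, g_max = s(a, b) :=
      Sym2.inductionOn g_max (fun a b => ⟨a, b, rfl⟩)
    subst hgrep
    have hgmF₀ : s(a₀,b₀) ∈ F₀ := mem_of_walk_edge hgm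
    have hne₀ : a₀ ≠ b₀ := by
      have := hEd _ (hF₀.1 hgmF₀); rwa [Sym2.mk_isDiag_iff] at this
    have hsplit := path_split p hp hgm
    have hbr₀ : ¬ (fromEdgeSet (↑F₀ : Set (Sym2 (Fin n))) \
        fromEdgeSet {s(a₀,b₀)}).Reachable a₀ b₀ :=
      isBridge_iff.mp ((isAcyclic_iff_forall_adj_isBridge.mp hF₀.2.1)
        (gr_adj.mpr ⟨hgmF₀, hne₀⟩))
    have hnr2 : ¬ (fromEdgeSet (↑(F₀.erase s(a₀,b₀)) : Set (Sym2 (Fin n)))).Reachable u v := by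
      rw [gr_erase]
      intro h
      rcases hsplit with ⟨h1, h2⟩ | ⟨h1, h2⟩
      · exact hbr₀ (h1.symm.trans (h.trans h2.symm))
      · exact hbr₀ (h2.trans (h.symm.trans h1))
    have heracy : (fromEdgeSet (↑(F₀.erase s(a₀,b₀)) : Set (Sym2 (Fin n)))).IsAcyclic :=
      acyclic_mono (fromEdgeSet_mono (by exact_mod_cast Finset.erase_subset _ _)) hF₀.2.1
    have hF₁a := insert_acyclic heracy huv hnr2
    have hle₁ : fromEdgeSet (↑(F₀.erase s(a₀,b₀)) : Set (Sym2 (Fin n))) ≤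
        fromEdgeSet (↑(insert s(u,v) (F₀.erase s(a₀,b₀))) : Set (Sym2 (Fin n))) :=
      fromEdgeSet_mono (by exact_mod_cast Finset.subset_insert _ _)
    have hadjuv₁ : (fromEdgeSet (↑(insert s(u,v) (F₀.erase s(a₀,b₀))) :
        Set (Sym2 (Fin n)))).Adj u v := gr_adj.mpr ⟨Finset.mem_insert_self _ _, huv⟩
    have hRa₀b₀ : (fromEdgeSet (↑(insert s(u,v) (F₀.erase s(a₀,b₀))) :
        Set (Sym2 (Fin n)))).Reachable a₀ b₀ := by
      rw [gr_erase] at hle₁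
      rcases hsplit with ⟨h1, h2⟩ | ⟨h1, h2⟩
      · exact (h1.mono hle₁).symm.trans (hadjuv₁.reachable.trans (h2.mono hle₁).symm)
      · exact (h2.mono hle₁).trans (hadjuv₁.reachable.symm.trans (h1.mono hle₁))
    have hF₁max : MaxAcyclicIn (insert s(u,v) E) (insert s(u,v) (F₀.erase s(a₀,b₀))) := by
      refine max_of_reach hEd' (Finset.insert_subset_insert _
        ((Finset.erase_subset _ _).trans hF₀.1)) hF₁a ?_
      intro c d hcd
      rcases Finset.mem_insert.mp hcd with h | h
      · rw [Sym2.eq_iff] at h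
        rcases h with ⟨rfl, rfl⟩ | ⟨rfl, rfl⟩
        · exact hadjuv₁.reachable
        · exact hadjuv₁.reachable.symm
      · refine reach_lift (fun c' d' hcd' => ?_) (max_reach hEd hF₀ h)
        obtain ⟨hmem', hne'⟩ := gr_adj.mp hcd'
        by_cases hgm' : s(c',d') = s(a₀,b₀)
        · rw [Sym2.eq_iff] at hgm'
          rcases hgm' with ⟨rfl, rfl⟩ | ⟨rfl, rfl⟩
          · exact hRa₀b₀
          · exact hRa₀b₀.symm
        · exact (gr_adj.mpr ⟨Finset.mem_insert_of_mem
            (Finset.mem_erase.mpr ⟨hgm', hmem'⟩), hne'⟩).reachable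
    have he₀er : s(u,v) ∉ F₀.erase s(a₀,b₀) :=
      fun h => he₀ (hF₀.1 (Finset.erase_subset _ _ h))
    have hsum : ∑ f ∈ insert s(u,v) (F₀.erase s(a₀,b₀)), x' f = ∑ f ∈ F₀, x f := by
      rw [Finset.sum_insert he₀er]
      have hcong : ∑ f ∈ F₀.erase s(a₀,b₀), x' f = ∑ f ∈ F₀.erase s(a₀,b₀), x f :=
        Finset.sum_congr rfl (fun f hf => if_neg (fun h =>
          he₀ (hF₀.1 (Finset.erase_subset _ _ (h ▸ hf)))))
      have hadd : x s(a₀,b₀) + ∑ f ∈ F₀.erase s(a₀,b₀), x f = ∑ f ∈ F₀, x f :=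
        Finset.add_sum_erase _ _ hgmF₀
      have h6 : x' s(u,v) = x s(a₀,b₀) := if_pos rfl
      rw [hcong, h6]
      exact hadd
    intro e he
    rcases Finset.mem_insert.mp he with rfl | heE
    · exact ⟨insert s(u,v) (F₀.erase s(a₀,b₀)), hF₁max,
        fun F' hF' => by rw [hsum]; exact claim1 F' hF', Finset.mem_insert_self _ _⟩
    · obtain ⟨Fe, hFe, hFemin, hFemem⟩ := hx e heE
      have hFer : (fromEdgeSet (↑Fe : Set (Sym2 (Fin n)))).Reachable u v :=
        reach_lift (fun a b hab => max_reach hEd hFe (gr_adj.mp hab).1) hc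
      refine ⟨Fe, max_insert_of_max hEd hEd' hFe hFer, fun F' hF' => ?_, hFemem⟩
      have h1 : ∑ f ∈ Fe, x' f = ∑ f ∈ Fe, x f :=
        Finset.sum_congr rfl (fun f hf => if_neg (fun (h : f = s(u,v)) => he₀ (h ▸ hFe.1 hf)))
      calc ∑ f ∈ Fe, x' f = ∑ f ∈ Fe, x f := h1
        _ ≤ ∑ f ∈ F₀, x f := hFemin F₀ hF₀
        _ ≤ ∑ f ∈ F', x' f := claim1 F' hF'
  · -- Case A : endpoints not connected; any weight (say 0) works
    refine ⟨0, ?_⟩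
    set x' : Sym2 (Fin n) → ℝ := fun e => if e = s(u,v) then 0 else x e with hx'
    have hins : ∀ G, MaxAcyclicIn E G → MaxAcyclicIn (insert s(u,v) E) (insert s(u,v) G) := by
      intro G hG
      have hnr : ¬ (fromEdgeSet (↑G : Set (Sym2 (Fin n)))).Reachable u v :=
        fun h => hc (h.mono (fromEdgeSet_mono (by exact_mod_cast hG.1)))
      have hacy := insert_acyclic hG.2.1 huv hnr
      have hadj : (fromEdgeSet (↑(insert s(u,v) G) : Set (Sym2 (Fin n)))).Adj u v :=
        gr_adj.mpr ⟨Finset.mem_insert_self _ _, huv⟩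
      refine max_of_reach hEd' (Finset.insert_subset_insert _ hG.1) hacy ?_
      intro a b hab
      rcases Finset.mem_insert.mp hab with h | h
      · rw [Sym2.eq_iff] at h
        rcases h with ⟨rfl, rfl⟩ | ⟨rfl, rfl⟩
        · exact hadj.reachable
        · exact hadj.reachable.symm
      · exact (max_reach hEd hG h).mono
          (fromEdgeSet_mono (by exact_mod_cast Finset.subset_insert _ _))
    have hdec : ∀ F', MaxAcyclicIn (insert s(u,v) E) F' →
        s(u,v) ∈ F' ∧ MaxAcyclicIn E (F'.erase s(u,v)) := by
      intro F' hF'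
      have he0 : s(u,v) ∈ F' := by
        by_contra he0
        have hF'E : F' ⊆ E := by
          intro f hf
          rcases Finset.mem_insert.mp (hF'.1 hf) with rfl | h
          · exact absurd hf he0
          · exact h
        exact hc ((max_reach hEd' hF' (Finset.mem_insert_self _ _)).mono
          (fromEdgeSet_mono (by exact_mod_cast hF'E)))
      refine ⟨he0, ?_⟩
      have herE : F'.erase s(u,v) ⊆ E := by
        intro f hf
        rcases Finset.mem_erase.mp hf with ⟨hfne, hfF'⟩
        rcases Finset.mem_insert.mp (hF'.1 hfF') with h | h
        · exact absurd h hfne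
        · exact h
      have hle : fromEdgeSet (↑(F'.erase s(u,v)) : Set (Sym2 (Fin n))) ≤
          fromEdgeSet (↑E : Set (Sym2 (Fin n))) :=
        fromEdgeSet_mono (by exact_mod_cast herE)
      refine max_of_reach hEd herE
        (acyclic_mono (fromEdgeSet_mono (by exact_mod_cast Finset.erase_subset _ _)) hF'.2.1)
        (fun a b hab => ?_)
      have hner : a ≠ b := by have := hEd _ hab; rwa [Sym2.mk_isDiag_iff] at this
      obtain ⟨q⟩ := max_reach hEd' hF' (Finset.mem_insert_of_mem hab)
      have hadjE : (fromEdgeSet (↑E : Set (Sym2 (Fin n)))).Adj a b := gr_adj.mpr ⟨hab, hner⟩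
      rcases walk_three (a := u) (b := v) q with h1 | ⟨h1, h2⟩ | ⟨h1, h2⟩
      · rw [gr_erase]; exact h1
      · rw [← gr_erase] at h1 h2
        exact absurd ((h1.mono hle).symm.trans
          (hadjE.reachable.trans (h2.mono hle).symm)) hc
      · rw [← gr_erase] at h1 h2
        exact absurd ((h2.mono hle).trans
          (hadjE.symm.reachable.trans (h1.mono hle))) hc
    have hxsum : ∀ G : Finset (Sym2 (Fin n)), G ⊆ E →
        ∑ f ∈ insert s(u,v) G, x' f = ∑ f ∈ G, x f := by
      intro G hGE
      rw [Finset.sum_insert (fun h => he₀ (hGE h))]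
      have h0 : x' s(u,v) = 0 := if_pos rfl
      rw [h0, zero_add]
      exact Finset.sum_congr rfl (fun f hf =>
        if_neg (fun (h : f = s(u,v)) => he₀ (h ▸ hGE hf)))
    have key : ∀ Fb, MaxAcyclicIn E Fb →
        (∀ F'', MaxAcyclicIn E F'' → ∑ f ∈ Fb, x f ≤ ∑ f ∈ F'', x f) →
        ∀ F', MaxAcyclicIn (insert s(u,v) E) F' →
          ∑ f ∈ insert s(u,v) Fb, x' f ≤ ∑ f ∈ F', x' f := by
      intro Fb hFb hFbmin F' hF'
      obtain ⟨he0, hmaxE⟩ := hdec F' hF'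
      rw [hxsum Fb hFb.1]
      have h2 : x' s(u,v) + ∑ f ∈ F'.erase s(u,v), x' f = ∑ f ∈ F', x' f :=
        Finset.add_sum_erase _ _ he0
      have h0 : x' s(u,v) = 0 := if_pos rfl
      have h3 : ∑ f ∈ F'.erase s(u,v), x' f = ∑ f ∈ F'.erase s(u,v), x f :=
        Finset.sum_congr rfl (fun f hf => if_neg (Finset.mem_erase.mp hf).1)
      have h4 := hFbmin _ hmaxE
      rw [h0, zero_add, h3] at h2
      linarith
    intro e he
    rcases Finset.mem_insert.mp he with rfl | heE
    · exact ⟨insert s(u,v) F₀, hins F₀ hF₀, key F₀ hF₀ hmin, Finset.mem_insert_self _ _⟩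
    · obtain ⟨Fe, hFe, hFemin, hFemem⟩ := hx e heE
      exact ⟨insert s(u,v) Fe, hins Fe hFe, key Fe hFe hFemin,
        Finset.mem_insert_of_mem hFemem⟩
end
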